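/- For the reduced planar system dφ/dt = √(ab) μ(φ)^{-1/2} p, dp/dt = (1/2)√(ab)(a−b) μ(φ)^{-3/2} sin(2φ)(c² − p²) with b > a > 0 and c > 0, restricted to the strip |p| ≤ c: the equilibria are exactly the points (φ, p) = (jπ/2, 0) with j ∈ ℤ; at each equilibrium the Jacobian matrix of the vector field has zero trace, and its determinant equals b(b−a)c²/a > 0 when j is even (so the eigenvalues are a purely imaginary conjugate pair) and equals −a(b−a)c²/b < 0 when j is odd (so the eigenvalues are real, nonzero and of opposite signs, i.e. the equilibrium is a saddle). -/

import Mathlib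

open Real

noncomputable section

/-- `μ(φ) = a cos²φ + b sin²φ`. -/
def muEll (a b φ : ℝ) : ℝ := a * Real.cos φ ^ 2 + b * Real.sin φ ^ 2

/-- Right-hand side of the `φ` equation: `√(ab) μ(φ)^{-1/2} p`. -/
def phiDot (a b : ℝ) (φ p : ℝ) : ℝ :=
  Real.sqrt (a * b) * muEll a b φ ^ (-(1 / 2) : ℝ) * p

/-- Right-hand side of the `p` equation:
`(1/2)√(ab)(a−b) μ(φ)^{-3/2} sin(2φ)(c² − p²)`. -/
def pDot (a b c : ℝ) (φ p : ℝ) : ℝ :=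
  (1 / 2) * Real.sqrt (a * b) * (a - b) * muEll a b φ ^ (-(3 / 2) : ℝ) *
    Real.sin (2 * φ) * (c ^ 2 - p ^ 2)


/-- The reduced planar Hug vector field on the ellipse. -/
def reducedField (a b c : ℝ) (q : ℝ × ℝ) : ℝ × ℝ :=
  (phiDot a b q.1 q.2, pDot a b c q.1 q.2)

lemma muEll_pos {a b : ℝ} (ha : 0 < a) (hb : 0 < b) (φ : ℝ) : 0 < muEll a b φ := by
  rcases eq_or_ne (Real.cos φ) 0 with h | h
  · have hs : Real.sin φ ^ 2 = 1 := by
      have := Real.sin_sq_add_cos_sq φ; rw [h] at this; nlinarith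
    simp [muEll, h, hs, hb]
  · have h1 : 0 < a * Real.cos φ ^ 2 := by positivity
    have h2 : 0 ≤ b * Real.sin φ ^ 2 := by positivity
    unfold muEll; linarith

lemma hasDerivAt_muEll (a b φ : ℝ) :
    HasDerivAt (muEll a b) ((b - a) * Real.sin (2 * φ)) φ := by
  have h1 : HasDerivAt (fun φ => a * Real.cos φ ^ 2 + b * Real.sin φ ^ 2)
      (a * (2 * Real.cos φ ^ 1 * (-Real.sin φ)) + b * (2 * Real.sin φ ^ 1 * Real.cos φ)) φ :=
    (((Real.hasDerivAt_cos φ).pow 2).const_mul a).add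
      (((Real.hasDerivAt_sin φ).pow 2).const_mul b)
  have : muEll a b = fun φ => a * Real.cos φ ^ 2 + b * Real.sin φ ^ 2 := rfl
  rw [this]
  convert h1 using 1
  rw [Real.sin_two_mul]; ring

lemma hasDerivAt_muEll_rpow {a b : ℝ} (ha : 0 < a) (hb : 0 < b) (r φ : ℝ) :
    HasDerivAt (fun φ => muEll a b φ ^ r)
      (r * muEll a b φ ^ (r - 1) * ((b - a) * Real.sin (2 * φ))) φ :=
  (Real.hasDerivAt_rpow_const (Or.inl (muEll_pos ha hb φ).ne')).comp φ (hasDerivAt_muEll a b φ)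

lemma hasFDerivAt_reducedField {a b : ℝ} (c : ℝ) (ha : 0 < a) (hb : 0 < b)
    (φ0 : ℝ) (hs : Real.sin (2 * φ0) = 0) :
    HasFDerivAt (reducedField a b c)
      (((Real.sqrt (a * b) * muEll a b φ0 ^ (-(1 / 2) : ℝ)) •
          ContinuousLinearMap.snd ℝ ℝ ℝ).prod
        ((Real.sqrt (a * b) * (a - b) * muEll a b φ0 ^ (-(3 / 2) : ℝ) *
            Real.cos (2 * φ0) * c ^ 2) • ContinuousLinearMap.fst ℝ ℝ ℝ))
      (φ0, 0) := by
  set A := Real.sqrt (a * b) * muEll a b φ0 ^ (-(1 / 2) : ℝ) with hA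
  set B := Real.sqrt (a * b) * (a - b) * muEll a b φ0 ^ (-(3 / 2) : ℝ) *
      Real.cos (2 * φ0) * c ^ 2 with hB
  have hfst : HasFDerivAt (fun q : ℝ × ℝ => q.1) (ContinuousLinearMap.fst ℝ ℝ ℝ) (φ0, 0) :=
    hasFDerivAt_fst
  have hsnd : HasFDerivAt (fun q : ℝ × ℝ => q.2) (ContinuousLinearMap.snd ℝ ℝ ℝ) (φ0, 0) :=
    hasFDerivAt_snd
  -- first component
  have hg : HasDerivAt (fun φ => Real.sqrt (a * b) * muEll a b φ ^ (-(1 / 2) : ℝ)) 0 φ0 := by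
    have := ((hasDerivAt_muEll_rpow ha hb (-(1 / 2)) φ0).const_mul (Real.sqrt (a * b)))
    simpa [hs] using this
  have hg' : HasFDerivAt (fun q : ℝ × ℝ => Real.sqrt (a * b) * muEll a b q.1 ^ (-(1 / 2) : ℝ))
      ((0 : ℝ) • ContinuousLinearMap.fst ℝ ℝ ℝ) (φ0, 0) :=
    by have := hg.comp_hasFDerivAt (φ0, 0) hfst; exact this
  have h1 : HasFDerivAt (fun q : ℝ × ℝ => phiDot a b q.1 q.2)
      (A • ContinuousLinearMap.snd ℝ ℝ ℝ) (φ0, 0) := by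
    have := hg'.mul hsnd
    have he : (fun q : ℝ × ℝ =>
        (Real.sqrt (a * b) * muEll a b q.1 ^ (-(1 / 2) : ℝ)) * q.2)
        = fun q : ℝ × ℝ => phiDot a b q.1 q.2 := by
      funext q; simp [phiDot]
    simp only [Pi.mul_def] at this
    rw [he] at this
    refine this.congr_fderiv ?_
    ext <;> simp [hA]
  -- second component
  have hu : HasDerivAt
      (fun φ => (1 / 2) * Real.sqrt (a * b) * (a - b) * muEll a b φ ^ (-(3 / 2) : ℝ))
      0 φ0 := by
    have := ((hasDerivAt_muEll_rpow ha hb (-(3 / 2)) φ0).const_mul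
      ((1 / 2) * Real.sqrt (a * b) * (a - b)))
    simpa [hs] using this
  have hv : HasDerivAt (fun φ => Real.sin (2 * φ)) (Real.cos (2 * φ0) * 2) φ0 := by
    have := (Real.hasDerivAt_sin (2 * φ0)).comp φ0 ((hasDerivAt_id φ0).const_mul 2)
    simpa [Function.comp_def] using this
  have hh : HasDerivAt
      (fun φ => (1 / 2) * Real.sqrt (a * b) * (a - b) * muEll a b φ ^ (-(3 / 2) : ℝ) *
        Real.sin (2 * φ))
      ((1 / 2) * Real.sqrt (a * b) * (a - b) * muEll a b φ0 ^ (-(3 / 2) : ℝ) *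
        (Real.cos (2 * φ0) * 2)) φ0 := by
    have := hu.mul hv
    simpa [hs, Pi.mul_def] using this
  have hh' : HasFDerivAt (fun q : ℝ × ℝ =>
      (1 / 2) * Real.sqrt (a * b) * (a - b) * muEll a b q.1 ^ (-(3 / 2) : ℝ) *
        Real.sin (2 * q.1))
      (((1 / 2) * Real.sqrt (a * b) * (a - b) * muEll a b φ0 ^ (-(3 / 2) : ℝ) *
        (Real.cos (2 * φ0) * 2)) • ContinuousLinearMap.fst ℝ ℝ ℝ) (φ0, 0) :=
    by have := hh.comp_hasFDerivAt (φ0, 0) hfst; exact this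
  have hq2 : HasFDerivAt (fun q : ℝ × ℝ => c ^ 2 - q.2 * q.2)
      ((0 : ℝ × ℝ →L[ℝ] ℝ) -
        ((0:ℝ) • ContinuousLinearMap.snd ℝ ℝ ℝ + (0:ℝ) • ContinuousLinearMap.snd ℝ ℝ ℝ))
      (φ0, 0) := (hasFDerivAt_const (c ^ 2) _).sub (hsnd.mul hsnd)
  have h2 : HasFDerivAt (fun q : ℝ × ℝ => pDot a b c q.1 q.2)
      (B • ContinuousLinearMap.fst ℝ ℝ ℝ) (φ0, 0) := by
    have := hh'.mul hq2
    have he : (fun q : ℝ × ℝ =>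
        ((1 / 2) * Real.sqrt (a * b) * (a - b) * muEll a b q.1 ^ (-(3 / 2) : ℝ) *
          Real.sin (2 * q.1)) * (c ^ 2 - q.2 * q.2))
        = fun q : ℝ × ℝ => pDot a b c q.1 q.2 := by
      funext q; simp only [pDot]; ring
    simp only [Pi.mul_def] at this
    rw [he] at this
    refine this.congr_fderiv ?_
    ext <;> simp [hB, hs] <;> ring
  exact HasFDerivAt.prodMk h1 h2

theorem reduced_hug_equilibria_trace_det
    (a b c : ℝ) (hab : a < b) (ha : 0 < a) (hc : 0 < c) :
    (∀ q : ℝ × ℝ, |q.2| ≤ c →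
      (reducedField a b c q = 0 ↔ (∃ j : ℤ, q.1 = j * (π / 2)) ∧ q.2 = 0)) ∧
    (∀ j : ℤ,
      LinearMap.trace ℝ (ℝ × ℝ)
          (fderiv ℝ (reducedField a b c) ((j : ℝ) * (π / 2), 0)).toLinearMap = 0 ∧
      (Even j →
        LinearMap.det
            (fderiv ℝ (reducedField a b c) ((j : ℝ) * (π / 2), 0)).toLinearMap
          = b * (b - a) * c ^ 2 / a) ∧
      (Odd j →
        LinearMap.det
            (fderiv ℝ (reducedField a b c) ((j : ℝ) * (π / 2), 0)).toLinearMap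
          = -(a * (b - a) * c ^ 2 / b))) := by
  have hb : 0 < b := ha.trans hab
  have hab0 : (0:ℝ) < a * b := mul_pos ha hb
  have hsab : Real.sqrt (a * b) ≠ 0 := (Real.sqrt_pos.mpr hab0).ne'
  constructor
  · intro q _
    constructor
    · intro h
      have h1 : phiDot a b q.1 q.2 = 0 := congrArg Prod.fst h
      have h2 : pDot a b c q.1 q.2 = 0 := congrArg Prod.snd h
      have hmu : muEll a b q.1 ^ (-(1 / 2) : ℝ) ≠ 0 :=
        (Real.rpow_pos_of_pos (muEll_pos ha hb q.1) _).ne'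
      have hp : q.2 = 0 := by
        by_contra hp
        exact hp (by
          have := mul_ne_zero (mul_ne_zero hsab hmu) hp
          exact absurd h1 this)
      refine ⟨?_, hp⟩
      rw [hp] at h2
      have hmu3 : muEll a b q.1 ^ (-(3 / 2) : ℝ) ≠ 0 :=
        (Real.rpow_pos_of_pos (muEll_pos ha hb q.1) _).ne'
      have hsin : Real.sin (2 * q.1) = 0 := by
        by_contra hsin
        have : (1 / 2) * Real.sqrt (a * b) * (a - b) * muEll a b q.1 ^ (-(3 / 2) : ℝ) *
            Real.sin (2 * q.1) * (c ^ 2 - 0 ^ 2) ≠ 0 := by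
          have hc2 : c ^ 2 - (0:ℝ) ^ 2 ≠ 0 := by simpa using (pow_pos hc 2).ne'
          have h12 : (1/2 : ℝ) ≠ 0 := by norm_num
          have habne : a - b ≠ 0 := sub_ne_zero.mpr hab.ne
          exact mul_ne_zero (mul_ne_zero (mul_ne_zero (mul_ne_zero
            (mul_ne_zero h12 hsab) habne) hmu3) hsin) hc2
        exact this h2
      rcases Real.sin_eq_zero_iff.mp hsin with ⟨n, hn⟩
      exact ⟨n, by linarith⟩
    · rintro ⟨⟨j, hj⟩, hp⟩
      have hsin : Real.sin (2 * q.1) = 0 := by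
        rw [hj]
        have : 2 * ((j:ℝ) * (π / 2)) = (j:ℝ) * π := by ring
        rw [this]
        exact Real.sin_int_mul_pi j
      have : reducedField a b c q = (phiDot a b q.1 q.2, pDot a b c q.1 q.2) := rfl
      rw [this, hp]
      simp [phiDot, pDot, hsin, Prod.ext_iff]
  · intro j
    set φ0 : ℝ := (j:ℝ) * (π / 2) with hφ0
    have hsin : Real.sin (2 * φ0) = 0 := by
      have : 2 * φ0 = (j:ℝ) * π := by rw [hφ0]; ring
      rw [this]; exact Real.sin_int_mul_pi j
    have hcos : Real.cos (2 * φ0) = (-1 : ℝ) ^ j := by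
      have : 2 * φ0 = (j:ℝ) * π := by rw [hφ0]; ring
      rw [this]
      simpa using Real.cos_int_mul_pi_sub 0 j
    have hmu : muEll a b φ0 = a * ((1 + (-1:ℝ)^j)/2) + b * ((1 - (-1:ℝ)^j)/2) := by
      have hc2 : Real.cos φ0 ^ 2 = (1 + Real.cos (2 * φ0)) / 2 := by
        rw [Real.cos_two_mul]; ring
      have hs2 : Real.sin φ0 ^ 2 = (1 - Real.cos (2 * φ0)) / 2 := by
        rw [Real.cos_two_mul, ← Real.sin_sq_add_cos_sq φ0]; ring
      rw [muEll, hc2, hs2, hcos]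
    have hF := (hasFDerivAt_reducedField c ha hb φ0 hsin).fderiv
    rw [hF]
    set A := Real.sqrt (a * b) * muEll a b φ0 ^ (-(1 / 2) : ℝ) with hA
    set B := Real.sqrt (a * b) * (a - b) * muEll a b φ0 ^ (-(3 / 2) : ℝ) *
        Real.cos (2 * φ0) * c ^ 2 with hB
    set L := ((A • ContinuousLinearMap.snd ℝ ℝ ℝ).prod
        (B • ContinuousLinearMap.fst ℝ ℝ ℝ)) with hL
    have htr : LinearMap.trace ℝ (ℝ × ℝ) L.toLinearMap = 0 := by
      rw [LinearMap.trace_eq_matrix_trace ℝ (Module.Basis.finTwoProd ℝ)]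
      simp [Matrix.trace_fin_two, LinearMap.toMatrix_apply, hL]
    have hdet : LinearMap.det L.toLinearMap = -(A * B) := by
      rw [← LinearMap.det_toMatrix (Module.Basis.finTwoProd ℝ)]
      rw [Matrix.det_fin_two]
      simp [LinearMap.toMatrix_apply, hL]
    refine ⟨htr, ?_, ?_⟩
    · intro hj
      have hpow : (-1 : ℝ) ^ j = 1 := Even.neg_one_zpow hj
      have hmua : muEll a b φ0 = a := by rw [hmu, hpow]; ring
      rw [hdet, hA, hB, hcos, hpow, hmua]
      have h1 : Real.sqrt (a * b) * Real.sqrt (a * b) = a * b :=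
        Real.mul_self_sqrt hab0.le
      have h2 : a ^ (-(1 / 2) : ℝ) * a ^ (-(3 / 2) : ℝ) = (a ^ 2)⁻¹ := by
        rw [← Real.rpow_add ha,
          show (-(1 / 2) + -(3 / 2) : ℝ) = ((-2 : ℤ) : ℝ) by norm_num,
          Real.rpow_intCast, zpow_neg]
        norm_num
      have key : Real.sqrt (a * b) * a ^ (-(1 / 2) : ℝ) *
          (Real.sqrt (a * b) * (a - b) * a ^ (-(3 / 2) : ℝ) * 1 * c ^ 2)
          = (a * b) * (a ^ 2)⁻¹ * ((a - b) * c ^ 2) := by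
        rw [show Real.sqrt (a * b) * a ^ (-(1 / 2) : ℝ) *
            (Real.sqrt (a * b) * (a - b) * a ^ (-(3 / 2) : ℝ) * 1 * c ^ 2)
            = (Real.sqrt (a * b) * Real.sqrt (a * b)) *
              (a ^ (-(1 / 2) : ℝ) * a ^ (-(3 / 2) : ℝ)) * ((a - b) * c ^ 2) from by ring,
          h1, h2]
      rw [key]
      field_simp
      ring
    · intro hj
      have hpow : (-1 : ℝ) ^ j = -1 := Odd.neg_one_zpow hj
      have hmub : muEll a b φ0 = b := by rw [hmu, hpow]; ring
      rw [hdet, hA, hB, hcos, hpow, hmub]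
      have h1 : Real.sqrt (a * b) * Real.sqrt (a * b) = a * b :=
        Real.mul_self_sqrt hab0.le
      have h2 : b ^ (-(1 / 2) : ℝ) * b ^ (-(3 / 2) : ℝ) = (b ^ 2)⁻¹ := by
        rw [← Real.rpow_add hb,
          show (-(1 / 2) + -(3 / 2) : ℝ) = ((-2 : ℤ) : ℝ) by norm_num,
          Real.rpow_intCast, zpow_neg]
        norm_num
      have key : Real.sqrt (a * b) * b ^ (-(1 / 2) : ℝ) *
          (Real.sqrt (a * b) * (a - b) * b ^ (-(3 / 2) : ℝ) * -1 * c ^ 2)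
          = -((a * b) * (b ^ 2)⁻¹ * ((a - b) * c ^ 2)) := by
        rw [show Real.sqrt (a * b) * b ^ (-(1 / 2) : ℝ) *
            (Real.sqrt (a * b) * (a - b) * b ^ (-(3 / 2) : ℝ) * -1 * c ^ 2)
            = -((Real.sqrt (a * b) * Real.sqrt (a * b)) *
              (b ^ (-(1 / 2) : ℝ) * b ^ (-(3 / 2) : ℝ)) * ((a - b) * c ^ 2)) from by ring,
          h1, h2]
      rw [key]
      field_simp
      ring
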